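/- Theorem 5 (Catoni-type PAC-Bayesian bound for arbitrary bounded losses): for any domain P over X×Y, any prior probability measure π on H, any measurable loss ℓ : H×X×Y → [0,1], any δ ∈ (0,1], and any α > 0, with probability at least 1−δ over the draw of an i.i.d. sample {(x_i,y_i)}_{i=1}^m ~ P^m, simultaneously for every probability measure ρ on H: E_{(x,y)~P} E_{h~ρ} ℓ(h,x,y) ≤ (α/(1−e^{−α})) · [ (1/m)·Σ_{i=1}^m E_{h~ρ} ℓ(h,x_i,y_i) + (KL(ρ‖π) + ln(1/δ)) / (m·α) ]. -/

import Mathlib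

open MeasureTheory

noncomputable section

variable {X H : Type*} [MeasurableSpace X] [MeasurableSpace H]

/-- The Kullback–Leibler divergence `KL(ρ‖π) = E_{h~ρ} ln(dρ/dπ)`, expressed through the
log-likelihood ratio `llr ρ π = log (dρ/dπ)`. It equals the usual KL divergence whenever
`ρ ≪ π` and `llr ρ π` is `ρ`-integrable (the cases where `KL(ρ‖π) < +∞`; otherwise
`KL(ρ‖π) = +∞` and the bound below is vacuous). -/
def klReal (ρ π : Measure H) : ℝ := ∫ h, llr ρ π h ∂ρ

lemma catoni_integrable_of_bounded {α : Type*} [MeasurableSpace α] {μ : Measure α}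
    [IsFiniteMeasure μ] {f : α → ℝ} (hf : AEStronglyMeasurable f μ) (C : ℝ)
    (h : ∀ x, |f x| ≤ C) : Integrable f μ :=
  ⟨hf, HasFiniteIntegral.of_bounded (C := C) (Filter.Eventually.of_forall h)⟩

lemma catoni_klReal_nonneg (μ ν : Measure H) [IsProbabilityMeasure μ] [IsProbabilityMeasure ν]
    (hμν : μ ≪ ν) (h : Integrable (llr μ ν) μ) : 0 ≤ klReal μ ν := by
  have hint : Integrable (fun x => (ν.rnDeriv μ x).toReal) μ :=
    Measure.integrable_toReal_rnDeriv
  have hexp_eq : (fun x => Real.exp (-llr μ ν x)) =ᵐ[μ] fun x => (ν.rnDeriv μ x).toReal :=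
    exp_neg_llr hμν
  have hintexp : Integrable (fun x => Real.exp (-llr μ ν x)) μ := hint.congr hexp_eq.symm
  have hle1 : ∫ x, Real.exp (-llr μ ν x) ∂μ ≤ 1 := by
    rw [integral_congr_ae hexp_eq, Measure.integral_toReal_rnDeriv']
    have h1 : (ν Set.univ).toReal = 1 := by simp
    have h2 : 0 ≤ (ν.singularPart μ Set.univ).toReal := ENNReal.toReal_nonneg
    rw [measureReal_def, measureReal_def]
    linarith
  have hjen : Real.exp (∫ x, -llr μ ν x ∂μ) ≤ ∫ x, Real.exp (-llr μ ν x) ∂μ := by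
    refine convexOn_exp.map_integral_le (Real.continuous_exp.continuousOn) isClosed_univ
      (Filter.Eventually.of_forall fun x => Set.mem_univ _) h.neg ?_
    exact hintexp
  rw [integral_neg] at hjen
  have h2 : Real.exp (-∫ x, llr μ ν x ∂μ) ≤ 1 := hjen.trans hle1
  have h3 := Real.exp_le_one_iff.mp h2
  unfold klReal
  linarith

lemma catoni_dv (ρ π : Measure H) [IsProbabilityMeasure ρ]
    [IsProbabilityMeasure π] (hρπ : ρ ≪ π) (hllr : Integrable (llr ρ π) ρ)
    (f : H → ℝ) (hfρ : Integrable f ρ) (hfπ : Integrable (fun x => Real.exp (f x)) π) :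
    ∫ x, f x ∂ρ ≤ klReal ρ π + Real.log (∫ x, Real.exp (f x) ∂π) := by
  have hπ' : IsProbabilityMeasure (π.tilted f) := isProbabilityMeasure_tilted hfπ
  have hac : ρ ≪ π.tilted f := hρπ.trans (absolutelyContinuous_tilted hfπ)
  have hint' : Integrable (llr ρ (π.tilted f)) ρ :=
    integrable_llr_tilted_right hρπ hfρ hllr hfπ
  have h0 : 0 ≤ klReal ρ (π.tilted f) := catoni_klReal_nonneg _ _ hac hint'
  have heq := integral_llr_tilted_right hρπ hfρ hfπ hllr
  unfold klReal at *
  linarith [heq ▸ h0]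

lemma catoni_convexOn {c : ℝ} (hc0 : 0 < c) (hc1 : c < 1) :
    ConvexOn ℝ (Set.Icc (0:ℝ) 1) (fun p => -Real.log (1 - c * p)) := by
  have hneg : ConvexOn ℝ (Set.Ioi (0:ℝ)) (fun x => -Real.log x) :=
    strictConcaveOn_log_Ioi.concaveOn.neg
  have h := hneg.comp_affineMap (AffineMap.lineMap (1:ℝ) (1-c))
  have hsub : Set.Icc (0:ℝ) 1 ⊆ (AffineMap.lineMap (1:ℝ) (1-c)) ⁻¹' Set.Ioi 0 := by
    intro p hp
    simp only [Set.mem_preimage, AffineMap.lineMap_apply, Set.mem_Ioi]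
    simp only [smul_eq_mul, vsub_eq_sub, vadd_eq_add]
    nlinarith [hp.1, hp.2]
  have h2 := h.subset hsub (convex_Icc 0 1)
  convert h2 using 2 with p
  rotate_left 4
  simp [AffineMap.lineMap_apply, smul_eq_mul, vsub_eq_sub, vadd_eq_add]
  ring_nf
  all_goals rfl

lemma catoni_exp_le {α t : ℝ} (ht0 : 0 ≤ t) (ht1 : t ≤ 1) :
    Real.exp (-(α * t)) ≤ 1 - (1 - Real.exp (-α)) * t := by
  have h := convexOn_exp.2 (Set.mem_univ (0:ℝ)) (Set.mem_univ (-α))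
    (by linarith : (0:ℝ) ≤ 1 - t) ht0 (by ring)
  simp only [smul_eq_mul, mul_zero, zero_add, Real.exp_zero, mul_one] at h
  have he : t * -α = -(α * t) := by ring
  rw [he] at h
  nlinarith [h]

set_option maxHeartbeats 1000000 in
/-- Theorem 5 (Catoni-type PAC-Bayesian bound for arbitrary bounded losses): for any domain
`P` over `X×Y`, any prior `π` on `H`, any measurable loss `ℓ : H×X×Y → [0,1]`, any
`δ ∈ (0,1]` and any `α > 0`, with probability at least `1−δ` over an i.i.d. `m`-sample from
`P`, simultaneously for every posterior `ρ` on `H` (with `KL(ρ‖π) < ∞`, i.e. `ρ ≪ π` and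
integrable log-likelihood ratio):
`E_{(x,y)~P} E_{h~ρ} ℓ(h,x,y) ≤ (α/(1−e^{−α})) · [ (1/m)·Σᵢ E_{h~ρ} ℓ(h,xᵢ,yᵢ)
  + (KL(ρ‖π) + ln(1/δ))/(m·α) ]`. -/
theorem catoni_pac_bayes_bound
    (P : Measure (X × Bool)) [IsProbabilityMeasure P]
    (π : Measure H) [IsProbabilityMeasure π]
    (L : H → X → Bool → ℝ)
    (hLmeas : Measurable fun p : H × X × Bool => L p.1 p.2.1 p.2.2)
    (hL01 : ∀ h x y, L h x y ∈ Set.Icc (0 : ℝ) 1)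
    (m : ℕ) (hm : 0 < m)
    (δ : ℝ) (hδ : δ ∈ Set.Ioc (0 : ℝ) 1)
    (α : ℝ) (hα : 0 < α) :
    (Measure.pi fun _ : Fin m => P)
      {s | ∀ ρ : Measure H, IsProbabilityMeasure ρ → ρ ≪ π →
        Integrable (llr ρ π) ρ →
        ∫ z, ∫ h, L h z.1 z.2 ∂ρ ∂P
          ≤ (α / (1 - Real.exp (-α))) *
              ((1 / (m : ℝ)) * ∑ i : Fin m, ∫ h, L h (s i).1 (s i).2 ∂ρ
                + (klReal ρ π + Real.log (1 / δ)) / ((m : ℝ) * α))}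
      ≥ ENNReal.ofReal (1 - δ) := by
  obtain ⟨hδ0, hδ1⟩ := hδ
  have hm0 : (0:ℝ) < m := Nat.cast_pos.mpr hm
  set c : ℝ := 1 - Real.exp (-α) with hc_def
  have hc0 : 0 < c := by
    have : Real.exp (-α) < 1 := Real.exp_lt_one_iff.mpr (by linarith)
    simp only [hc_def]; linarith
  have hc1 : c < 1 := by
    have := Real.exp_pos (-α)
    simp only [hc_def]; linarith
  -- basic loss facts
  have hL0 : ∀ h (z : X × Bool), 0 ≤ L h z.1 z.2 := fun h z => (hL01 h z.1 z.2).1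
  have hL1 : ∀ h (z : X × Bool), L h z.1 z.2 ≤ 1 := fun h z => (hL01 h z.1 z.2).2
  have hLz : ∀ h, Measurable (fun z : X × Bool => L h z.1 z.2) := by
    intro h
    exact hLmeas.comp ((measurable_const.prodMk measurable_id : Measurable fun z : X × Bool => (h, z)))
  have hLabs : ∀ h (z : X × Bool), |L h z.1 z.2| ≤ 1 := fun h z =>
    abs_le.mpr ⟨by linarith [hL0 h z], hL1 h z⟩
  have hIntLP : ∀ h, Integrable (fun z : X × Bool => L h z.1 z.2) P := fun h =>
    catoni_integrable_of_bounded (hLz h).aestronglyMeasurable 1 (hLabs h)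
  -- the true risk r
  set r : H → ℝ := fun h => ∫ z, L h z.1 z.2 ∂P with hr_def
  have hrm : StronglyMeasurable r :=
    hLmeas.stronglyMeasurable.integral_prod_right'
  have hr0 : ∀ h, 0 ≤ r h := fun h => integral_nonneg fun z => hL0 h z
  have hr1 : ∀ h, r h ≤ 1 := by
    intro h
    calc r h ≤ ∫ _ : X × Bool, (1:ℝ) ∂P :=
          integral_mono (hIntLP h) (integrable_const 1) fun z => hL1 h z
    _ = 1 := by simp
  -- Φ
  set Φ : ℝ → ℝ := fun p => -Real.log (1 - c * p) with hΦ_def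
  have hpos : ∀ p, 0 ≤ p → p ≤ 1 → 0 < 1 - c * p := by
    intro p h0 h1; nlinarith
  have hΦ0 : ∀ h, 0 ≤ Φ (r h) := by
    intro h
    have h2 : 1 - c * r h ≤ 1 := by nlinarith [hr0 h]
    have := Real.log_nonpos (hpos _ (hr0 h) (hr1 h)).le h2
    simp only [hΦ_def]; linarith
  have hΦα : ∀ h, Φ (r h) ≤ α := by
    intro h
    have hbase : Real.exp (-α) ≤ 1 - c * r h := by
      have : c * r h ≤ c := by nlinarith [hr1 h]
      simp only [hc_def] at this ⊢; linarith
    have hlog := Real.log_le_log (Real.exp_pos (-α)) hbase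
    rw [Real.log_exp] at hlog
    simp only [hΦ_def]; linarith
  -- the exponential moment function F
  set F : (Fin m → X × Bool) → H → ℝ :=
    fun s h => (m : ℝ) * Φ (r h) - α * ∑ i, L h (s i).1 (s i).2 with hF_def
  have hΦrm : Measurable fun h => Φ (r h) :=
    ((measurable_const.sub (measurable_const.mul hrm.measurable)).log).neg
  have hFmeas : Measurable (Function.uncurry F) := by
    apply Measurable.sub
    · exact measurable_const.mul (hΦrm.comp measurable_snd)
    · refine measurable_const.mul (Finset.measurable_sum _ fun i _ => ?_)
      exact hLmeas.comp (measurable_snd.prodMk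
        (((measurable_pi_apply i).comp measurable_fst)))
  have hsum_le : ∀ (s : Fin m → X × Bool) h, ∑ i, L h (s i).1 (s i).2 ≤ (m:ℝ) := by
    intro s h
    calc ∑ i, L h (s i).1 (s i).2 ≤ ∑ _i : Fin m, (1:ℝ) :=
          Finset.sum_le_sum fun i _ => hL1 h (s i)
    _ = (m:ℝ) := by simp
  have hsum_0 : ∀ (s : Fin m → X × Bool) h, 0 ≤ ∑ i, L h (s i).1 (s i).2 := fun s h =>
    Finset.sum_nonneg fun i _ => hL0 h (s i)
  have hFabs : ∀ s h, |F s h| ≤ (m:ℝ) * α := by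
    intro s h
    rw [abs_le]
    constructor
    · have := hsum_le s h
      simp only [hF_def]
      nlinarith [hΦ0 h, hα.le]
    · have := hsum_0 s h
      simp only [hF_def]
      nlinarith [hΦα h, hα.le, hm0.le]
  have hexpF_bd : ∀ s h, |Real.exp (F s h)| ≤ Real.exp ((m:ℝ) * α) := by
    intro s h
    rw [abs_of_pos (Real.exp_pos _)]
    exact Real.exp_le_exp.mpr ((abs_le.mp (hFabs s h)).2)
  -- the product measure
  letI : MeasureSpace (X × Bool) := ⟨P⟩
  haveI hPvol : IsProbabilityMeasure (volume : Measure (X × Bool)) :=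
    ‹IsProbabilityMeasure P›
  set Pm : Measure (Fin m → X × Bool) := Measure.pi fun _ => P with hPm_def
  haveI : IsProbabilityMeasure Pm := by rw [hPm_def]; infer_instance
  have hPmvol : Pm = (volume : Measure (Fin m → X × Bool)) := rfl
  -- Step A: pointwise-in-h sample expectation is ≤ 1
  have hA1 : ∀ h, ∫ s, Real.exp (F s h) ∂Pm ≤ 1 := by
    intro h
    have hposh := hpos _ (hr0 h) (hr1 h)
    have heq : ∀ s : Fin m → X × Bool, Real.exp (F s h)
        = Real.exp ((m:ℝ) * Φ (r h)) * ∏ i, Real.exp (-(α * L h (s i).1 (s i).2)) := by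
      intro s
      rw [← Real.exp_sum, ← Real.exp_add]
      congr 1
      simp only [hF_def, Finset.sum_neg_distrib, ← Finset.mul_sum]
      ring
    have hintexp : Integrable (fun z : X × Bool => Real.exp (-(α * L h z.1 z.2))) P := by
      refine catoni_integrable_of_bounded ((((hLz h).const_mul α).neg).exp).aestronglyMeasurable
        1 fun z => ?_
      rw [abs_of_pos (Real.exp_pos _)]
      calc Real.exp (-(α * L h z.1 z.2)) ≤ Real.exp 0 :=
            Real.exp_le_exp.mpr (by nlinarith [hL0 h z, hα.le])
      _ = 1 := Real.exp_zero
    have hintlin : Integrable (fun z : X × Bool => 1 - c * L h z.1 z.2) P :=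
      (integrable_const 1).sub ((hIntLP h).const_mul c)
    have hmoment : ∫ z, Real.exp (-(α * L h z.1 z.2)) ∂P ≤ 1 - c * r h := by
      calc ∫ z, Real.exp (-(α * L h z.1 z.2)) ∂P
          ≤ ∫ z, (1 - c * L h z.1 z.2) ∂P :=
            integral_mono hintexp hintlin fun z => catoni_exp_le (hL0 h z) (hL1 h z)
      _ = 1 - c * r h := by
            rw [integral_sub (integrable_const 1) ((hIntLP h).const_mul c),
              integral_const_mul]
            simp [hr_def]
    have hprod : ∫ s, ∏ i, Real.exp (-(α * L h (s i).1 (s i).2)) ∂Pm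
        = (∫ z, Real.exp (-(α * L h z.1 z.2)) ∂P) ^ m := by
      rw [hPmvol]
      have := MeasureTheory.integral_fintype_prod_eq_pow (ι := Fin m) (μ := P)
        (f := fun z : X × Bool => Real.exp (-(α * L h z.1 z.2)))
      simp only [Fintype.card_fin] at this
      exact this
    calc ∫ s, Real.exp (F s h) ∂Pm
        = Real.exp ((m:ℝ) * Φ (r h)) *
            ∫ s, ∏ i, Real.exp (-(α * L h (s i).1 (s i).2)) ∂Pm := by
          simp_rw [heq]; rw [integral_const_mul]
    _ = Real.exp ((m:ℝ) * Φ (r h)) * (∫ z, Real.exp (-(α * L h z.1 z.2)) ∂P) ^ m := by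
          rw [hprod]
    _ ≤ Real.exp ((m:ℝ) * Φ (r h)) * (1 - c * r h) ^ m := by
          have hnn : 0 ≤ ∫ z, Real.exp (-(α * L h z.1 z.2)) ∂P :=
            integral_nonneg fun z => (Real.exp_pos _).le
          exact mul_le_mul_of_nonneg_left
            (pow_le_pow_left₀ hnn hmoment m) (Real.exp_pos _).le
    _ = 1 := by
          have : Real.exp ((m:ℝ) * Φ (r h)) = ((1 - c * r h)⁻¹) ^ m := by
            rw [show ((m:ℝ) * Φ (r h)) = (m:ℕ) * Φ (r h) by norm_num,
              Real.exp_nat_mul]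
            congr 1
            simp only [hΦ_def]
            rw [Real.exp_neg, Real.exp_log hposh]
          rw [this, ← mul_pow, inv_mul_cancel₀ hposh.ne', one_pow]
  -- Step B: Fubini
  set A : (Fin m → X × Bool) → ℝ := fun s => ∫ h, Real.exp (F s h) ∂π with hA_def
  have hexpFm : StronglyMeasurable fun p : (Fin m → X × Bool) × H => Real.exp (F p.1 p.2) :=
    (Real.measurable_exp.comp hFmeas).stronglyMeasurable
  have hAm : StronglyMeasurable A := hexpFm.integral_prod_right'
  have hintProd : Integrable (Function.uncurry fun s h => Real.exp (F s h)) (Pm.prod π) := by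
    refine catoni_integrable_of_bounded hexpFm.aestronglyMeasurable (Real.exp ((m:ℝ) * α))
      fun p => hexpF_bd p.1 p.2
  have hAint : Integrable A Pm := by
    refine catoni_integrable_of_bounded hAm.aestronglyMeasurable (Real.exp ((m:ℝ) * α))
      fun s => ?_
    have h0 : 0 ≤ A s := integral_nonneg fun h => (Real.exp_pos _).le
    rw [abs_of_nonneg h0]
    calc A s ≤ ∫ _ : H, Real.exp ((m:ℝ) * α) ∂π := by
          refine integral_mono ?_ (integrable_const _) fun h =>
            (abs_le.mp (hexpF_bd s h)).2
          exact catoni_integrable_of_bounded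
            ((Real.measurable_exp.comp (hFmeas.comp ((measurable_const.prodMk measurable_id : Measurable fun h : H => (s, h)))
              )).aestronglyMeasurable) (Real.exp ((m:ℝ) * α)) fun h => hexpF_bd s h
    _ = Real.exp ((m:ℝ) * α) := by simp
  have hAle1 : ∫ s, A s ∂Pm ≤ 1 := by
    have hswap : ∫ s, ∫ h, Real.exp (F s h) ∂π ∂Pm
        = ∫ h, ∫ s, Real.exp (F s h) ∂Pm ∂π :=
      integral_integral_swap hintProd
    rw [hA_def]
    simp only
    rw [hswap]
    have hinner : Integrable (fun h => ∫ s, Real.exp (F s h) ∂Pm) π := by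
      refine catoni_integrable_of_bounded
        (hexpFm.integral_prod_left'.aestronglyMeasurable) (Real.exp ((m:ℝ) * α)) fun h => ?_
      have h0 : (0:ℝ) ≤ ∫ s, Real.exp (F s h) ∂Pm :=
        integral_nonneg fun s => (Real.exp_pos _).le
      rw [abs_of_nonneg h0]
      calc ∫ s, Real.exp (F s h) ∂Pm ≤ ∫ _ , Real.exp ((m:ℝ) * α) ∂Pm := by
            refine integral_mono ?_ (integrable_const _) fun s =>
              (abs_le.mp (hexpF_bd s h)).2
            exact catoni_integrable_of_bounded
              ((Real.measurable_exp.comp (hFmeas.comp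
                ((measurable_id.prodMk measurable_const : Measurable fun s : Fin m → X × Bool => (s, h))))).aestronglyMeasurable)
              (Real.exp ((m:ℝ) * α)) fun s => hexpF_bd s h
      _ = Real.exp ((m:ℝ) * α) := by simp
    calc ∫ h, ∫ s, Real.exp (F s h) ∂Pm ∂π ≤ ∫ _ : H, (1:ℝ) ∂π :=
          integral_mono hinner (integrable_const 1) fun h => hA1 h
    _ = 1 := by simp
  -- Step C: Markov
  have hMarkov : Pm {s | 1/δ ≤ A s} ≤ ENNReal.ofReal δ := by
    have hnn : 0 ≤ᵐ[Pm] A :=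
      Filter.Eventually.of_forall fun s => integral_nonneg fun h => (Real.exp_pos _).le
    have h1 := mul_meas_ge_le_integral_of_nonneg hnn hAint (1/δ)
    have h2 : (1/δ) * (Pm {s | 1/δ ≤ A s}).toReal ≤ 1 := h1.trans hAle1
    have h3 : (Pm {s | 1/δ ≤ A s}).toReal ≤ δ := by
      rw [mul_comm, mul_one_div, div_le_one hδ0] at h2
      exact h2
    rw [← ENNReal.ofReal_toReal (measure_ne_top Pm _)]
    exact ENNReal.ofReal_le_ofReal h3
  have hEmeas : MeasurableSet {s : Fin m → X × Bool | 1/δ ≤ A s} :=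
    measurableSet_le measurable_const hAm.measurable
  have hgood : Pm {s | A s < 1/δ} ≥ ENNReal.ofReal (1 - δ) := by
    have hcompl : {s : Fin m → X × Bool | A s < 1/δ} = {s | 1/δ ≤ A s}ᶜ := by
      ext s; simp [not_le]
    rw [hcompl, prob_compl_eq_one_sub hEmeas]
    calc ENNReal.ofReal (1 - δ) = 1 - ENNReal.ofReal δ := by
          rw [ENNReal.ofReal_sub 1 hδ0.le, ENNReal.ofReal_one]
    _ ≤ 1 - Pm {s | 1/δ ≤ A s} := tsub_le_tsub_left hMarkov 1
  -- Final: the good event implies the PAC-Bayes bound for all posteriors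
  refine le_trans hgood (measure_mono ?_)
  intro s hs
  intro ρ hρ hρπ hllr
  haveI := hρ
  simp only [Set.mem_setOf_eq] at hs
  -- integrability over ρ and π
  have hFsm : Measurable (F s) := hFmeas.comp ((measurable_const.prodMk measurable_id : Measurable fun h : H => (s, h)))
  have hfρ : Integrable (F s) ρ :=
    catoni_integrable_of_bounded hFsm.aestronglyMeasurable ((m:ℝ) * α) (hFabs s)
  have hfπ : Integrable (fun h => Real.exp (F s h)) π :=
    catoni_integrable_of_bounded (Real.measurable_exp.comp hFsm).aestronglyMeasurable
      (Real.exp ((m:ℝ) * α)) (hexpF_bd s)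
  have hdv := catoni_dv ρ π hρπ hllr (F s) hfρ hfπ
  have hlogle : Real.log (∫ h, Real.exp (F s h) ∂π) ≤ Real.log (1/δ) :=
    Real.log_le_log (integral_exp_pos hfπ) (le_of_lt hs)
  -- expand ∫ F s dρ
  have hIntLρ : ∀ i : Fin m, Integrable (fun h => L h (s i).1 (s i).2) ρ := by
    intro i
    refine catoni_integrable_of_bounded ?_ 1 fun h => hLabs h (s i)
    exact (hLmeas.comp (measurable_id.prodMk measurable_const)).aestronglyMeasurable
  have hIntΦρ : Integrable (fun h => Φ (r h)) ρ :=
    catoni_integrable_of_bounded hΦrm.aestronglyMeasurable α fun h =>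
      abs_le.mpr ⟨by linarith [hΦ0 h, hα], hΦα h⟩
  have hIntrρ : Integrable r ρ :=
    catoni_integrable_of_bounded hrm.aestronglyMeasurable 1 fun h =>
      abs_le.mpr ⟨by linarith [hr0 h], hr1 h⟩
  have hFint : ∫ h, F s h ∂ρ
      = (m:ℝ) * ∫ h, Φ (r h) ∂ρ - α * ∑ i, ∫ h, L h (s i).1 (s i).2 ∂ρ := by
    simp only [hF_def]
    rw [integral_sub (hIntΦρ.const_mul _)
      ((integrable_finset_sum _ fun i _ => hIntLρ i).const_mul _)]
    rw [integral_const_mul, integral_const_mul, integral_finset_sum _ fun i _ => hIntLρ i]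
  -- Jensen
  set R : ℝ := ∫ h, r h ∂ρ with hR_def
  have hR0 : 0 ≤ R := integral_nonneg fun h => hr0 h
  have hR1 : R ≤ 1 := by
    calc R ≤ ∫ _ : H, (1:ℝ) ∂ρ := integral_mono hIntrρ (integrable_const 1) fun h => hr1 h
    _ = 1 := by simp
  have hΦcont : ContinuousOn Φ (Set.Icc (0:ℝ) 1) := by
    refine ContinuousOn.neg (ContinuousOn.log ?_ fun p hp => (hpos p hp.1 hp.2).ne')
    exact (continuous_const.sub (continuous_const.mul continuous_id)).continuousOn
  have hjen : Φ R ≤ ∫ h, Φ (r h) ∂ρ := by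
    refine (catoni_convexOn hc0 hc1).map_integral_le hΦcont isClosed_Icc
      (Filter.Eventually.of_forall fun h => ⟨hr0 h, hr1 h⟩) hIntrρ ?_
    exact hIntΦρ
  -- put it together
  set K : ℝ := klReal ρ π + Real.log (1 / δ) with hK_def
  set Sg : ℝ := ∑ i, ∫ h, L h (s i).1 (s i).2 ∂ρ with hSg_def
  have hkey : (m:ℝ) * Φ R ≤ α * Sg + K := by
    have h1 : (m:ℝ) * ∫ h, Φ (r h) ∂ρ - α * Sg ≤ klReal ρ π + Real.log (1/δ) := by
      rw [← hFint]
      exact hdv.trans (by linarith)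
    have h2 : (m:ℝ) * Φ R ≤ (m:ℝ) * ∫ h, Φ (r h) ∂ρ :=
      mul_le_mul_of_nonneg_left hjen hm0.le
    rw [hK_def]
    clear_value Φ R Sg
    linarith
  set B : ℝ := (α * Sg + K) / m with hB_def
  have hΦRB : Φ R ≤ B := by
    rw [hB_def, le_div_iff₀ hm0]
    linarith [hkey]
  have hposR := hpos R hR0 hR1
  have hexpB : Real.exp (-B) ≤ 1 - c * R := by
    have : -B ≤ Real.log (1 - c * R) := by
      simp only [hΦ_def] at hΦRB; linarith
    calc Real.exp (-B) ≤ Real.exp (Real.log (1 - c * R)) := Real.exp_le_exp.mpr this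
    _ = 1 - c * R := Real.exp_log hposR
  have hcRB : c * R ≤ B := by
    have := Real.add_one_le_exp (-B)
    linarith
  have hRB : R ≤ B / c := by
    rw [le_div_iff₀ hc0]; linarith [hcRB]
  -- identify LHS with R
  have hswap2 : ∫ z, ∫ h, L h z.1 z.2 ∂ρ ∂P = R := by
    rw [hR_def]
    have hint2 : Integrable (Function.uncurry fun (z : X × Bool) (h : H) => L h z.1 z.2)
        (P.prod ρ) := by
      refine catoni_integrable_of_bounded ?_ 1 fun p => hLabs p.2 p.1
      exact (hLmeas.comp (measurable_snd.prodMk measurable_fst)).aestronglyMeasurable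
    rw [integral_integral_swap hint2]
  rw [hswap2]
  refine hRB.trans (le_of_eq ?_)
  rw [hB_def]
  field_simp

end
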